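/- Let N be a positive multiple of 8 and let F be the set of functions f : {1,…,N} → {0,1} with exactly N/2 values equal to 1, equipped with the Hamming distance. Then any ball of radius N/4 in F has cardinality at most 2^N · exp(−πN/64). -/
import Mathlib

theorem stmt3 (N : ℕ) (hN : 0 < N) (h8 : 8 ∣ N) (f : Fin N → Bool)
    (hf : Nat.card {i : Fin N // f i = true} = N / 2) :
    (Nat.card {g : Fin N → Bool //
        Nat.card {i : Fin N // g i = true} = N / 2 ∧ hammingDist f g ≤ N / 4} : ℝ)
      ≤ 2 ^ N * Real.exp (-(Real.pi * N) / 64) := by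
  classical
  obtain ⟨m, hm⟩ := h8
  set P : (Fin N → Bool) → Prop := fun g =>
    Nat.card {i : Fin N // g i = true} = N / 2 ∧ hammingDist f g ≤ N / 4 with hP
  have hcard : (Nat.card {g : Fin N → Bool // P g} : ℝ)
      = ((Finset.univ.filter P).card : ℝ) := by
    rw [Nat.card_eq_fintype_card, Fintype.card_subtype]
  set w : Fin N → Bool → ℝ := fun i b => if f i = b then (3/4 : ℝ) else (1/4 : ℝ) with hw
  have hsum1 : ∑ g ∈ (Finset.univ : Finset (Fin N → Bool)), ∏ i, w i (g i) = 1 := by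
    rw [← Fintype.piFinset_univ, ← Finset.prod_univ_sum]
    have : ∀ i : Fin N, ∑ b : Bool, w i b = 1 := by
      intro i
      cases h : f i <;> simp [hw, h] <;> norm_num
    rw [Finset.prod_congr rfl (fun i _ => this i), Finset.prod_const_one]
  have hprod : ∀ g : Fin N → Bool, ∏ i, w i (g i)
      = (3/4 : ℝ) ^ (N - hammingDist f g) * (1/4 : ℝ) ^ (hammingDist f g) := by
    intro g
    have hd : hammingDist f g = (Finset.univ.filter (fun i => ¬ f i = g i)).card := by
      simp [hammingDist, ne_eq]
    have hc : (Finset.univ.filter (fun i => f i = g i)).card = N - hammingDist f g := by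
      have h2 := Finset.card_filter_add_card_filter_not
        (s := (Finset.univ : Finset (Fin N))) (p := fun i => f i = g i)
      simp only [Finset.card_univ, Fintype.card_fin] at h2
      omega
    calc ∏ i, w i (g i)
        = ∏ i : Fin N, (if f i = g i then (3/4:ℝ) else (1/4:ℝ)) := rfl
      _ = (∏ i ∈ Finset.univ.filter (fun i => f i = g i), (3/4:ℝ)) *
            ∏ i ∈ Finset.univ.filter (fun i => ¬ f i = g i), (1/4:ℝ) := Finset.prod_ite _ _
      _ = (3/4:ℝ) ^ (N - hammingDist f g) * (1/4:ℝ) ^ (hammingDist f g) := by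
          rw [Finset.prod_const, Finset.prod_const, hc, ← hd]
  -- lower bound each term of the filtered sum
  set c : ℝ := (3/4 : ℝ) ^ N * (1/3 : ℝ) ^ (N / 4) with hcdef
  have hcpos : 0 < c := by positivity
  have hlb : ∀ g ∈ Finset.univ.filter P, c ≤ ∏ i, w i (g i) := by
    intro g hg
    have hgP : hammingDist f g ≤ N / 4 := (Finset.mem_filter.mp hg).2.2
    rw [hprod g]
    have hdle : hammingDist f g ≤ N := by
      simpa using hammingDist_le_card_fintype (x := f) (y := g)
    have key : (3/4:ℝ) ^ (N - hammingDist f g) * (1/4:ℝ) ^ (hammingDist f g)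
        = (3/4:ℝ) ^ N * (1/3:ℝ) ^ (hammingDist f g) := by
      rw [show (1/4:ℝ) = (3/4) * (1/3) by norm_num, mul_pow, ← mul_assoc, ← pow_add]
      rw [Nat.sub_add_cancel hdle]
    rw [key, hcdef]
    exact mul_le_mul_of_nonneg_left
      (pow_le_pow_of_le_one (by norm_num) (by norm_num) hgP) (by positivity)
  have hmain : ((Finset.univ.filter P).card : ℝ) * c ≤ 1 := by
    calc ((Finset.univ.filter P).card : ℝ) * c
        = (Finset.univ.filter P).card • c := by rw [nsmul_eq_mul]
      _ ≤ ∑ g ∈ Finset.univ.filter P, ∏ i, w i (g i) := Finset.card_nsmul_le_sum _ _ _ hlb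
      _ ≤ ∑ g ∈ (Finset.univ : Finset (Fin N → Bool)), ∏ i, w i (g i) := by
          apply Finset.sum_le_sum_of_subset_of_nonneg (Finset.filter_subset _ _)
          intro g _ _
          apply Finset.prod_nonneg
          intro i _
          rw [hw]; dsimp only; split <;> norm_num
      _ = 1 := hsum1
  have hcount : ((Finset.univ.filter P).card : ℝ) ≤ (4/3 : ℝ) ^ N * 3 ^ (N / 4) := by
    have h1 : ((Finset.univ.filter P).card : ℝ) ≤ 1 / c := by
      rw [le_div_iff₀ hcpos]; exact hmain
    refine h1.trans (le_of_eq ?_)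
    rw [hcdef]
    rw [one_div, mul_inv, ← inv_pow, ← inv_pow]
    norm_num
  rw [hcard]
  refine hcount.trans ?_
  -- final comparison
  rw [hm]
  rw [show 8 * m / 4 = 2 * m from by omega]
  have hexp : Real.exp (-(Real.pi * (8 * m : ℕ)) / 64) = (Real.exp (-(Real.pi) / 8)) ^ m := by
    rw [← Real.exp_nat_mul]
    congr 1
    push_cast
    ring
  rw [hexp, pow_mul, pow_mul, pow_mul, ← mul_pow, ← mul_pow]
  apply pow_le_pow_left₀ (by positivity)
  have hpi : Real.pi < 3.15 := Real.pi_lt_d2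
  have hpi0 : 0 < Real.pi := Real.pi_pos
  have h2 : (1 : ℝ) + (-(Real.pi)/8) ≤ Real.exp (-(Real.pi)/8) := by
    have := Real.add_one_le_exp (-(Real.pi)/8)
    linarith
  nlinarith [h2, hpi, hpi0]
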